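/- Let A be the adjacency matrix of a finite graph with max degree D, R a set of vertices, and x(t) = e^{τt(DI + A)} x(0) with x(0) ≥ 0 supported on R, Σ_i x_i(0) = N₀. Then for any vertex j with dist(j,R) ≥ l and any t ≥ 0: x_j(t) ≤ N₀ e^{τtD} (e^{τtD} − Σ_{m<l} (τtD)^m/m!) ≤ N₀ e^{τtD} e^{τtD} (τtD)^l / l!. -/

import Mathlib

open Matrix

section Aux

lemma lightcone_exp_smul_one_mat {n : ℕ} (r : ℝ) :
    NormedSpace.exp (r • (1 : Matrix (Fin n) (Fin n) ℝ)) = Real.exp r • 1 := by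
  letI : SeminormedRing (Matrix (Fin n) (Fin n) ℝ) := Matrix.linftyOpSemiNormedRing
  letI : NormedRing (Matrix (Fin n) (Fin n) ℝ) := Matrix.linftyOpNormedRing
  letI : NormedAlgebra ℝ (Matrix (Fin n) (Fin n) ℝ) := Matrix.linftyOpNormedAlgebra
  have h := NormedSpace.algebraMap_exp_comm (𝔸 := Matrix (Fin n) (Fin n) ℝ) r
  rw [← Real.exp_eq_exp_ℝ, Algebra.algebraMap_eq_smul_one, Algebra.algebraMap_eq_smul_one] at h
  exact h.symm

lemma lightcone_entry_hasSum {n : ℕ} (M : Matrix (Fin n) (Fin n) ℝ) (j i : Fin n) :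
    HasSum (fun m : ℕ => ((m.factorial : ℝ))⁻¹ * (M ^ m) j i)
      (NormedSpace.exp M j i) := by
  letI : SeminormedRing (Matrix (Fin n) (Fin n) ℝ) := Matrix.linftyOpSemiNormedRing
  letI : NormedRing (Matrix (Fin n) (Fin n) ℝ) := Matrix.linftyOpNormedRing
  letI : NormedAlgebra ℝ (Matrix (Fin n) (Fin n) ℝ) := Matrix.linftyOpNormedAlgebra
  have h := NormedSpace.exp_series_hasSum_exp' (𝕂 := ℝ) M
  exact Pi.hasSum.mp (Pi.hasSum.mp h j) i

lemma lightcone_adj_pow_nonneg {n : ℕ} (G : SimpleGraph (Fin n)) [DecidableRel G.Adj]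
    (m : ℕ) (a b : Fin n) : 0 ≤ (G.adjMatrix ℝ ^ m) a b := by
  induction m generalizing a with
  | zero => simp [Matrix.one_apply]; positivity
  | succ m ih =>
    rw [pow_succ', SimpleGraph.adjMatrix_mul_apply]
    exact Finset.sum_nonneg fun u _ => ih u

lemma lightcone_adj_pow_le {n : ℕ} (G : SimpleGraph (Fin n)) [DecidableRel G.Adj]
    (m : ℕ) (a b : Fin n) : (G.adjMatrix ℝ ^ m) a b ≤ (G.maxDegree : ℝ) ^ m := by
  induction m generalizing a with
  | zero => simp [Matrix.one_apply]; split <;> norm_num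
  | succ m ih =>
    rw [pow_succ', SimpleGraph.adjMatrix_mul_apply]
    calc ∑ u ∈ G.neighborFinset a, (G.adjMatrix ℝ ^ m) u b
        ≤ ∑ _u ∈ G.neighborFinset a, (G.maxDegree : ℝ) ^ m :=
          Finset.sum_le_sum fun u _ => ih u
      _ = (G.degree a : ℝ) * (G.maxDegree : ℝ) ^ m := by
          rw [Finset.sum_const, nsmul_eq_mul]; rfl
      _ ≤ (G.maxDegree : ℝ) * (G.maxDegree : ℝ) ^ m := by
          have := G.degree_le_maxDegree a
          have h2 : (G.degree a : ℝ) ≤ (G.maxDegree : ℝ) := by exact_mod_cast this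
          exact mul_le_mul_of_nonneg_right h2 (by positivity)
      _ = (G.maxDegree : ℝ) ^ (m + 1) := by ring

lemma lightcone_adj_pow_zero {n : ℕ} (G : SimpleGraph (Fin n)) [DecidableRel G.Adj]
    {m l : ℕ} {a b : Fin n} (hl : l ≤ G.dist a b) (hm : m < l) :
    (G.adjMatrix ℝ ^ m) a b = 0 := by
  rw [SimpleGraph.adjMatrix_pow_apply_eq_card_walk]
  have : IsEmpty {p : G.Walk a b | p.length = m} := by
    constructor
    rintro ⟨p, hp⟩
    have := G.dist_le p
    simp only [Set.mem_setOf_eq] at hp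
    omega
  exact_mod_cast (Fintype.card_eq_zero_iff.mpr this)

lemma lightcone_exp_hasSum (y : ℝ) :
    HasSum (fun m : ℕ => y ^ m / m.factorial) (Real.exp y) := by
  rw [Real.exp_eq_exp_ℝ]
  exact NormedSpace.expSeries_div_hasSum_exp y

lemma lightcone_tail_le {y : ℝ} (hy : 0 ≤ y) (l : ℕ) :
    Real.exp y - ∑ m ∈ Finset.range l, y ^ m / m.factorial ≤
      Real.exp y * y ^ l / l.factorial := by
  have hg := lightcone_exp_hasSum y
  have hsum := hg.summable
  have h1 := Summable.sum_add_tsum_nat_add l hsum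
  rw [hg.tsum_eq] at h1
  have key : ∀ m : ℕ, y ^ (m + l) / ((m + l).factorial : ℝ) ≤
      (y ^ l / l.factorial) * (y ^ m / m.factorial) := by
    intro m
    rw [div_mul_div_comm, ← pow_add]
    have hfacle : ((l.factorial * m.factorial : ℕ) : ℝ) ≤ ((m + l).factorial : ℝ) := by
      exact_mod_cast Nat.le_of_dvd (Nat.factorial_pos _)
        (by simpa [Nat.add_comm] using Nat.factorial_mul_factorial_dvd_factorial_add l m)
    have hpos : (0:ℝ) < (l.factorial : ℝ) * (m.factorial : ℝ) := by positivity
    rw [add_comm l m]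
    calc y ^ (m + l) / ((m + l).factorial : ℝ)
        ≤ y ^ (m + l) / ((l.factorial : ℝ) * (m.factorial : ℝ)) := by
          apply div_le_div_of_nonneg_left (pow_nonneg hy _) hpos
          exact_mod_cast hfacle
      _ = y ^ (m + l) / ((l.factorial : ℝ) * (m.factorial : ℝ)) := rfl
  have h2 : ∑' m : ℕ, y ^ (m + l) / ((m + l).factorial : ℝ) ≤
      ∑' m : ℕ, (y ^ l / l.factorial) * (y ^ m / m.factorial) :=
    Summable.tsum_le_tsum key ((summable_nat_add_iff l).mpr hsum) (hsum.mul_left _)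
  have h3 : ∑' m : ℕ, (y ^ l / l.factorial) * (y ^ m / m.factorial) =
      (y ^ l / l.factorial) * Real.exp y := (hg.mul_left _).tsum_eq
  rw [h3] at h2
  have : Real.exp y - ∑ m ∈ Finset.range l, y ^ m / m.factorial =
      ∑' m : ℕ, y ^ (m + l) / ((m + l).factorial : ℝ) := by linarith
  rw [this]
  calc ∑' m : ℕ, y ^ (m + l) / ((m + l).factorial : ℝ)
      ≤ (y ^ l / l.factorial) * Real.exp y := h2
    _ = Real.exp y * y ^ l / l.factorial := by ring

end Aux

/-- Quantitative light-cone bound: for `x(t) = e^{τ t (D I + A)} x(0)` with `x(0) ≥ 0`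
supported on `R` with total mass `N₀`, and `j` at distance at least `l` from `R`,
`x_j(t) ≤ N₀ e^{τtD} (e^{τtD} − Σ_{m<l} (τtD)^m/m!) ≤ N₀ e^{τtD} e^{τtD} (τtD)^l / l!`. -/
theorem stmt_19 {n : ℕ} (G : SimpleGraph (Fin n)) [DecidableRel G.Adj]
    (τ : ℝ) (hτ : 0 < τ)
    (R : Finset (Fin n)) (x0 : Fin n → ℝ) (N₀ : ℝ)
    (hx0 : ∀ i, 0 ≤ x0 i) (hsupp : ∀ i ∉ R, x0 i = 0) (hmass : ∑ i, x0 i = N₀)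
    (j : Fin n) (l : ℕ) (hdist : ∀ i ∈ R, l ≤ G.dist j i)
    (t : ℝ) (ht : 0 ≤ t) :
    (NormedSpace.exp ((τ * t) • ((G.maxDegree : ℝ) • (1 : Matrix (Fin n) (Fin n) ℝ)
        + G.adjMatrix ℝ)) *ᵥ x0) j ≤
        N₀ * Real.exp (τ * t * G.maxDegree) *
          (Real.exp (τ * t * G.maxDegree) -
            ∑ m ∈ Finset.range l, (τ * t * G.maxDegree) ^ m / m.factorial) ∧
      N₀ * Real.exp (τ * t * G.maxDegree) *
          (Real.exp (τ * t * G.maxDegree) -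
            ∑ m ∈ Finset.range l, (τ * t * G.maxDegree) ^ m / m.factorial) ≤
        N₀ * Real.exp (τ * t * G.maxDegree) * Real.exp (τ * t * G.maxDegree) *
          (τ * t * G.maxDegree) ^ l / l.factorial := by
  have hc0 : (0:ℝ) ≤ τ * t := mul_nonneg hτ.le ht
  set D : ℝ := (G.maxDegree : ℝ) with hDdef
  have hD0 : 0 ≤ D := Nat.cast_nonneg _
  set y : ℝ := τ * t * D with hydef
  have hy0 : 0 ≤ y := mul_nonneg hc0 hD0
  set A : Matrix (Fin n) (Fin n) ℝ := G.adjMatrix ℝ with hA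
  set S : ℝ := ∑ m ∈ Finset.range l, y ^ m / m.factorial with hS
  have hN0 : 0 ≤ N₀ := hmass ▸ Finset.sum_nonneg fun i _ => hx0 i
  -- split the exponential
  have hcomm : Commute ((τ * t * D) • (1 : Matrix (Fin n) (Fin n) ℝ)) ((τ * t) • A) :=
    ((Commute.one_left A).smul_left _).smul_right _
  have hsplit : NormedSpace.exp ((τ * t) • (D • (1 : Matrix (Fin n) (Fin n) ℝ) + A)) =
      Real.exp y • NormedSpace.exp ((τ * t) • A) := by
    rw [smul_add, smul_smul, Matrix.exp_add_of_commute _ _ hcomm,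
      lightcone_exp_smul_one_mat, smul_mul_assoc, one_mul, hydef]
  -- entry bound
  have hentry : ∀ i ∈ R, (NormedSpace.exp ((τ * t) • A)) j i ≤ Real.exp y - S := by
    intro i hi
    set f : ℕ → ℝ := fun m => (τ * t) ^ m * (A ^ m) j i / m.factorial with hfdef
    have hf2 : HasSum f ((NormedSpace.exp ((τ * t) • A)) j i) := by
      have hf := lightcone_entry_hasSum ((τ * t) • A) j i
      convert hf using 2 with m
      rw [hfdef, smul_pow, Matrix.smul_apply, smul_eq_mul]
      ring
    have hf0 : ∀ m < l, f m = 0 := by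
      intro m hm
      have hz : (A ^ m) j i = 0 := lightcone_adj_pow_zero G (hdist i hi) hm
      simp only [hfdef, hz, mul_zero, zero_div]
    have hfle : ∀ m, f m ≤ y ^ m / m.factorial := by
      intro m
      rw [hfdef, hydef, mul_pow]
      have h1 : (A ^ m) j i ≤ D ^ m := lightcone_adj_pow_le G m j i
      have h2 := mul_le_mul_of_nonneg_left h1 (pow_nonneg hc0 m)
      exact (div_le_div_iff_of_pos_right (by positivity)).mpr h2
    have hsumf := hf2.summable
    have h1 := Summable.sum_add_tsum_nat_add l hsumf
    rw [hf2.tsum_eq] at h1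
    have hz : ∑ m ∈ Finset.range l, f m = 0 :=
      Finset.sum_eq_zero fun m hm => hf0 m (Finset.mem_range.mp hm)
    have hg := lightcone_exp_hasSum y
    have h2 := Summable.sum_add_tsum_nat_add l hg.summable
    rw [hg.tsum_eq] at h2
    have h3 : ∑' m : ℕ, f (m + l) ≤ ∑' m : ℕ, y ^ (m + l) / ((m + l).factorial : ℝ) :=
      Summable.tsum_le_tsum (fun m => hfle (m + l)) ((summable_nat_add_iff l).mpr hsumf)
        ((summable_nat_add_iff l).mpr hg.summable)
    rw [hS]
    linarith
  -- first inequality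
  have hexp_pos := (Real.exp_pos y).le
  constructor
  · rw [hsplit, Matrix.smul_mulVec, Pi.smul_apply, smul_eq_mul]
    have hmv : (NormedSpace.exp ((τ * t) • A) *ᵥ x0) j =
        ∑ i, (NormedSpace.exp ((τ * t) • A)) j i * x0 i := by
      simp [Matrix.mulVec, dotProduct]
    rw [hmv]
    have hsum : ∑ i, (NormedSpace.exp ((τ * t) • A)) j i * x0 i ≤ (Real.exp y - S) * N₀ := by
      rw [← hmass, Finset.mul_sum]
      apply Finset.sum_le_sum
      intro i _
      by_cases hi : i ∈ R
      · exact mul_le_mul_of_nonneg_right (hentry i hi) (hx0 i)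
      · simp [hsupp i hi]
    calc Real.exp y * ∑ i, (NormedSpace.exp ((τ * t) • A)) j i * x0 i
        ≤ Real.exp y * ((Real.exp y - S) * N₀) := mul_le_mul_of_nonneg_left hsum hexp_pos
      _ = N₀ * Real.exp y * (Real.exp y - S) := by ring
  -- second inequality
  · have htail := lightcone_tail_le hy0 l
    calc N₀ * Real.exp y * (Real.exp y - S)
        ≤ N₀ * Real.exp y * (Real.exp y * y ^ l / l.factorial) :=
          mul_le_mul_of_nonneg_left htail (mul_nonneg hN0 hexp_pos)
      _ = N₀ * Real.exp y * Real.exp y * y ^ l / l.factorial := by ring
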